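/- arXiv:1609.01002 — 2 statements merged into one kernel-verified Lean document; each statement's English description precedes it below -/
import Mathlib

section
/- If the sequence of row positions of a robber of speed R and a pursuing line of cops satisfies the recurrence analysis of Proposition 3.1, then the inequality L ≥ n(R−1)/(2R−1) + 2 together with x¹_c − x⁰_c ≥ (x¹_r − x⁰_r)/R − 1, x¹_r > x¹_c + L, x⁰_r ≤ x⁰_c + R, and x¹_c − x⁰_c < n − 2L leads to a contradiction; formally: there do not exist reals x⁰_c, x⁰_r, x¹_c, x¹_r with x⁰_c ≤ x⁰_r ≤ x⁰_c + R, x¹_r > x¹_c + L, x¹_c − x⁰_c ≥ (x¹_r − x⁰_r)/R − 1 and x¹_c − x⁰_c < n − 2L, when R ≥ 2, n > 0 and L ≥ n(R−1)/(2R−1) + 2. -/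
theorem stmt_12 (R : ℕ) (hR : 2 ≤ R) (n L : ℝ) (hn : 0 < n)
    (hL : L ≥ n * ((R : ℝ) - 1) / (2 * (R : ℝ) - 1) + 2) :
    ¬ ∃ x0c x0r x1c x1r : ℝ,
        x0c ≤ x0r ∧ x0r ≤ x0c + R ∧ x1r > x1c + L ∧
        x1c - x0c ≥ (x1r - x0r) / R - 1 ∧ x1c - x0c < n - 2 * L := by
  rintro ⟨x0c, x0r, x1c, x1r, h1, h2, h3, h4, h5⟩
  have hR2 : (2:ℝ) ≤ (R:ℝ) := by exact_mod_cast hR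
  have hRpos : (0:ℝ) < (R:ℝ) := by linarith
  have h2R : (0:ℝ) < 2 * (R:ℝ) - 1 := by linarith
  have hL' : L * (2 * (R:ℝ) - 1) ≥ n * ((R:ℝ) - 1) + 2 * (2 * (R:ℝ) - 1) := by
    have := (div_le_iff₀ h2R).mp (by linarith : n * ((R:ℝ) - 1) / (2 * (R:ℝ) - 1) ≤ L - 2)
    linarith
  have h4' : (x1c - x0c) * R ≥ x1r - x0r - R := by
    have := (div_le_iff₀ hRpos).mp (by linarith : (x1r - x0r) / R ≤ x1c - x0c + 1)
    linarith
  nlinarith [mul_lt_mul_of_pos_right h5 hRpos, sq_nonneg ((R:ℝ) - 1)]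
end

section
/- In a 9×9 array of N×N grids forming an 18N-wide region (the union of two vertically adjacent 1-cells, each a 9×9 array of N×N grids), between any N×N subgrid P in the lower 1-cell and any N×N subgrid Q in the upper 1-cell there exist N pairwise vertex-disjoint paths, each of length at most 36N, contained in the union of the two 1-cells. -/
/-- The grid graph on ℤ²: two squares are adjacent iff they share an edge. -/
def gridGraph : SimpleGraph (ℤ × ℤ) where
  Adj p q := |p.1 - q.1| + |p.2 - q.2| = 1
  symm := by constructor; intro p q (h : |p.1 - q.1| + |p.2 - q.2| = 1); rw [abs_sub_comm p.1, abs_sub_comm p.2] at h; exact h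
  loopless := by constructor; intro p h; simp at h

open SimpleGraph

def seg (d : ℤ × ℤ) (hd : |d.1| + |d.2| = 1) :
    (n : ℕ) → (p : ℤ × ℤ) → gridGraph.Walk p (p.1 + n * d.1, p.2 + n * d.2)
  | 0, p => Walk.nil.copy rfl (by simp)
  | n+1, p =>
    (Walk.cons (show gridGraph.Adj p (p.1 + d.1, p.2 + d.2) by
        show |p.1 - (p.1 + d.1)| + |p.2 - (p.2 + d.2)| = 1
        rw [show p.1 - (p.1 + d.1) = -d.1 by ring, show p.2 - (p.2 + d.2) = -d.2 by ring,
          abs_neg, abs_neg]; exact hd)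
      (seg d hd n (p.1 + d.1, p.2 + d.2))).copy rfl
      (by rw [Prod.mk.injEq]; constructor <;> push_cast <;> ring)

lemma seg_length (d : ℤ × ℤ) (hd : |d.1| + |d.2| = 1) :
    ∀ (n : ℕ) (p : ℤ × ℤ), (seg d hd n p).length = n
  | 0, p => by simp [seg]
  | n+1, p => by simp [seg, seg_length d hd n]

lemma seg_support (d : ℤ × ℤ) (hd : |d.1| + |d.2| = 1) :
    ∀ (n : ℕ) (p : ℤ × ℤ), (seg d hd n p).support
      = (List.range (n+1)).map (fun k : ℕ => (p.1 + (k : ℤ) * d.1, p.2 + (k : ℤ) * d.2))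
  | 0, p => by simp [seg, List.range_succ]
  | n+1, p => by
    rw [seg, Walk.support_copy, Walk.support_cons, seg_support d hd n]
    conv_rhs => rw [List.range_succ_eq_map, List.map_cons, List.map_map]
    congr 1
    · simp
    · apply List.map_congr_left
      intro k _
      simp only [Function.comp_apply, Prod.mk.injEq]
      constructor <;> push_cast <;> ring

def trip (e : ℤ) (he : e = 1 ∨ e = -1) (x0 y0 : ℤ) (n1 n2 n3 : ℕ) :
    gridGraph.Walk (x0, y0) (x0 + n2 * e, y0 + n1 + n3) :=
  ((seg (0,1) (by norm_num) n1 (x0, y0)).copy rfl (by simp)).append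
    ((((seg (e,0) (by rcases he with h | h <;> simp [h]) n2 (x0, y0 + n1)).copy rfl
        (by simp)).append
      ((seg (0,1) (by norm_num) n3 (x0 + n2 * e, y0 + n1)).copy rfl (by simp))))

lemma trip_length (e : ℤ) (he : e = 1 ∨ e = -1) (x0 y0 : ℤ) (n1 n2 n3 : ℕ) :
    (trip e he x0 y0 n1 n2 n3).length = n1 + n2 + n3 := by
  simp [trip, seg_length]
  omega

lemma trip_support (e : ℤ) (he : e = 1 ∨ e = -1) (x0 y0 : ℤ) (n1 n2 n3 : ℕ) :
    (trip e he x0 y0 n1 n2 n3).support =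
      ((List.range (n1+1)).map fun k : ℕ => (x0, y0 + (k:ℤ))) ++
      (((List.range n2).map fun k : ℕ => (x0 + ((k:ℤ)+1)*e, y0 + (n1:ℤ))) ++
       ((List.range n3).map fun k : ℕ => (x0 + (n2:ℤ)*e, y0 + (n1:ℤ) + ((k:ℤ)+1)))) := by
  rw [trip, Walk.support_append, Walk.support_append]
  rw [Walk.support_copy, Walk.support_copy, Walk.support_copy, seg_support, seg_support,
    seg_support]
  congr 1
  · simp
  · simp only [List.range_succ_eq_map, List.map_cons, List.tail_cons, List.cons_append,
      List.map_map]
    congr 1 <;> apply List.map_congr_left <;> intro k _ <;>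
      simp only [Function.comp_apply, Prod.mk.injEq] <;> constructor <;> push_cast <;> ring

lemma trip_mem (e : ℤ) (he : e = 1 ∨ e = -1) (x0 y0 : ℤ) (n1 n2 n3 : ℕ) (p : ℤ × ℤ)
    (hp : p ∈ (trip e he x0 y0 n1 n2 n3).support) :
    (∃ k : ℕ, k ≤ n1 ∧ p = (x0, y0 + (k:ℤ))) ∨
    (∃ k : ℕ, k < n2 ∧ p = (x0 + ((k:ℤ)+1)*e, y0 + (n1:ℤ))) ∨
    (∃ k : ℕ, k < n3 ∧ p = (x0 + (n2:ℤ)*e, y0 + (n1:ℤ) + ((k:ℤ)+1))) := by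
  rw [trip_support] at hp
  simp only [List.mem_append, List.mem_map, List.mem_range] at hp
  rcases hp with ⟨k, hk, rfl⟩ | ⟨k, hk, rfl⟩ | ⟨k, hk, rfl⟩
  · exact Or.inl ⟨k, by omega, rfl⟩
  · exact Or.inr (Or.inl ⟨k, hk, rfl⟩)
  · exact Or.inr (Or.inr ⟨k, hk, rfl⟩)

lemma trip_isPath (e : ℤ) (he : e = 1 ∨ e = -1) (x0 y0 : ℤ) (n1 n2 n3 : ℕ) :
    (trip e he x0 y0 n1 n2 n3).IsPath := by
  rw [Walk.isPath_def, trip_support]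
  rw [List.nodup_append, List.nodup_append]
  refine ⟨?_, ⟨?_, ?_, ?_⟩, ?_⟩
  · refine List.Nodup.map ?_ List.nodup_range
    intro k l h
    simp only [Prod.mk.injEq] at h
    omega
  · refine List.Nodup.map ?_ List.nodup_range
    intro k l h
    simp only [Prod.mk.injEq] at h
    have := h.1
    rcases he with rfl | rfl <;> omega
  · refine List.Nodup.map ?_ List.nodup_range
    intro k l h
    simp only [Prod.mk.injEq] at h
    omega
  · rintro p hp2 q hp3 rfl
    simp only [List.mem_map, List.mem_range] at hp2 hp3
    obtain ⟨k, hk, rfl⟩ := hp2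
    obtain ⟨l, hl, h⟩ := hp3
    simp only [Prod.mk.injEq] at h
    omega
  · rintro p hp1 q hp rfl
    simp only [List.mem_map, List.mem_range, List.mem_append] at hp1 hp
    obtain ⟨k, hk, rfl⟩ := hp1
    rcases hp with ⟨l, hl, h⟩ | ⟨l, hl, h⟩ <;> simp only [Prod.mk.injEq] at h
    · rcases he with rfl | rfl <;> omega
    · omega

lemma master (N : ℕ) (hN : 0 < N) (A B A' B' : ℤ) (e : ℤ) (he : e = 1 ∨ e = -1)
    (c : Fin N → ℤ) (hc0 : ∀ i, 0 ≤ c i) (hcN : ∀ i, c i < N)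
    (hA0 : 0 ≤ A) (hA9 : A + N ≤ 9*N) (hA'0 : 0 ≤ A') (hA'9 : A' + N ≤ 9*N)
    (hB0 : 0 ≤ B) (hB9 : B + N ≤ 9*N) (hB'9 : 9*N ≤ B') (hB'18 : B' + N ≤ 18*N)
    (n2 : ℕ) (hn2 : (n2:ℤ) * e = A' - A) (hn2le : (n2:ℤ) ≤ 8*N)
    (K1 : ∀ i j : Fin N, c i = c j → i = j)
    (K2 : ∀ i j : Fin N, (e = 1 → (j:ℤ) < i) → (e = -1 → (i:ℤ) < j) → c j ≤ c i → False)
    (K3 : ∀ i j : Fin N, A + i = A' + j → c j < c i → False)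
    (K4 : ∀ i j : Fin N, ∀ t : ℤ, (e = 1 → 1 ≤ t ∧ t ≤ n2) → (e = -1 → -(n2:ℤ) ≤ t ∧ t ≤ -1) →
      A + i + t = A' + j → c j < c i → False) :
    ∃ w : Fin N → (u : ℤ × ℤ) × (v : ℤ × ℤ) × gridGraph.Walk u v,
      (∀ i, (w i).2.2.IsPath) ∧
      (∀ i, A ≤ (w i).1.1 ∧ (w i).1.1 < A + N ∧ B ≤ (w i).1.2 ∧ (w i).1.2 < B + N) ∧
      (∀ i, A' ≤ (w i).2.1.1 ∧ (w i).2.1.1 < A' + N ∧ B' ≤ (w i).2.1.2 ∧ (w i).2.1.2 < B' + N) ∧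
      (∀ i, ∀ p ∈ (w i).2.2.support,
        0 ≤ p.1 ∧ p.1 < 9 * N ∧ 0 ≤ p.2 ∧ p.2 < 18 * N) ∧
      (∀ i, (w i).2.2.length ≤ 36 * N) ∧
      (∀ i j, i ≠ j → ∀ p ∈ (w i).2.2.support, p ∉ (w j).2.2.support) := by
  have hNZ : (0:ℤ) < N := by exact_mod_cast hN
  set n1 : Fin N → ℕ := fun i => (9*N + c i - B).toNat with hn1def
  set n3 : ℕ := (B' - 9*N).toNat with hn3def
  have hn1 : ∀ i, ((n1 i : ℕ) : ℤ) = 9*N + c i - B := fun i =>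
    Int.toNat_of_nonneg (by have := hc0 i; omega)
  have hn3 : ((n3 : ℕ) : ℤ) = B' - 9*N := Int.toNat_of_nonneg (by omega)
  have hK1 : ∀ i j : Fin N, (i:ℤ) = (j:ℤ) → i = j := fun i j h => Fin.ext (by exact_mod_cast h)
  have hiN : ∀ i : Fin N, (i:ℤ) < N := fun i => by exact_mod_cast i.isLt
  have hi0 : ∀ i : Fin N, (0:ℤ) ≤ i := fun i => by positivity
  refine ⟨fun i => ⟨(A + i, B), (A + i + n2 * e, B + n1 i + n3),
    trip e he (A + (i:ℤ)) B (n1 i) n2 n3⟩, fun i => trip_isPath e he _ _ _ _ _, ?_, ?_, ?_, ?_, ?_⟩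
  · intro i
    dsimp only
    refine ⟨by have := hi0 i; omega, by have := hiN i; omega, le_refl _, by omega⟩
  · intro i
    dsimp only
    have hx : A + (i:ℤ) + n2 * e = A' + i := by omega
    have hy : B + ((n1 i : ℕ):ℤ) + n3 = B' + c i := by
      rw [hn1, hn3]; ring
    refine ⟨?_, ?_, ?_, ?_⟩ <;> simp only [hx, hy] <;>
      [skip; skip; skip; skip] <;> have h0 := hi0 i <;> have h1 := hiN i <;>
      have h2 := hc0 i <;> have h3 := hcN i <;> omega
  · intro i p hp
    have h0 := hi0 i; have h1 := hiN i; have h2 := hc0 i; have h3 := hcN i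
    have h4 := hn1 i
    rcases trip_mem e he _ _ _ _ _ _ hp with ⟨k, hk, rfl⟩ | ⟨k, hk, rfl⟩ | ⟨k, hk, rfl⟩
    · have : (k:ℤ) ≤ ((n1 i:ℕ):ℤ) := by exact_mod_cast hk
      refine ⟨by omega, by omega, by omega, by omega⟩
    · have : (k:ℤ) < (n2:ℤ) := by exact_mod_cast hk
      rcases he with rfl | rfl <;>
        refine ⟨by omega, by omega, by omega, by omega⟩
    · have : (k:ℤ) < ((n3:ℕ):ℤ) := by exact_mod_cast hk
      rcases he with rfl | rfl <;>
        refine ⟨by omega, by omega, by omega, by omega⟩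
  · intro i
    rw [trip_length]
    have h2 := hc0 i; have h3 := hcN i; have h4 := hn1 i
    have : ((n1 i : ℕ):ℤ) + (n2:ℤ) + ((n3:ℕ):ℤ) ≤ 36 * N := by omega
    exact_mod_cast this
  · intro i j hij p hpi hpj
    have h0i := hi0 i; have h1i := hiN i; have h2i := hc0 i; have h3i := hcN i
    have h0j := hi0 j; have h1j := hiN j; have h2j := hc0 j; have h3j := hcN j
    have h4i := hn1 i; have h4j := hn1 j
    rcases trip_mem e he _ _ _ _ _ _ hpi with ⟨k, hk, rfl⟩ | ⟨k, hk, rfl⟩ | ⟨k, hk, rfl⟩ <;>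
      rcases trip_mem e he _ _ _ _ _ _ hpj with ⟨l, hl, h⟩ | ⟨l, hl, h⟩ | ⟨l, hl, h⟩ <;>
      simp only [Prod.mk.injEq] at h <;>
      [skip; skip; skip; skip; skip; skip; skip; skip; skip]
    -- (1,1)
    · exact hij (hK1 i j (by omega))
    -- (1,2)
    · have hkk : (k:ℤ) ≤ ((n1 i:ℕ):ℤ) := by exact_mod_cast hk
      have hll : (l:ℤ) < (n2:ℤ) := by exact_mod_cast hl
      refine K2 i j (fun h1 => ?_) (fun h1 => ?_) (by omega) <;> subst h1 <;> omega
    -- (1,3)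
    · have hkk : (k:ℤ) ≤ ((n1 i:ℕ):ℤ) := by exact_mod_cast hk
      have hll : (l:ℤ) < ((n3:ℕ):ℤ) := by exact_mod_cast hl
      exact K3 i j (by omega) (by omega)
    -- (2,1)
    · have hkk : (k:ℤ) < (n2:ℤ) := by exact_mod_cast hk
      have hll : (l:ℤ) ≤ ((n1 j:ℕ):ℤ) := by exact_mod_cast hl
      refine K2 j i (fun h1 => ?_) (fun h1 => ?_) (by omega) <;> subst h1 <;> omega
    -- (2,2)
    · exact hij (K1 i j (by omega))
    -- (2,3)
    · have hkk : (k:ℤ) < (n2:ℤ) := by exact_mod_cast hk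
      have hll : (l:ℤ) < ((n3:ℕ):ℤ) := by exact_mod_cast hl
      refine K4 i j (((k:ℤ)+1)*e) (fun h1 => ?_) (fun h1 => ?_) ?_ (by omega) <;>
        [subst h1; subst h1; skip]
      · omega
      · omega
      · rcases he with rfl | rfl <;> omega
    -- (3,1)
    · have hkk : (k:ℤ) < ((n3:ℕ):ℤ) := by exact_mod_cast hk
      have hll : (l:ℤ) ≤ ((n1 j:ℕ):ℤ) := by exact_mod_cast hl
      exact K3 j i (by omega) (by omega)
    -- (3,2)
    · have hkk : (k:ℤ) < ((n3:ℕ):ℤ) := by exact_mod_cast hk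
      have hll : (l:ℤ) < (n2:ℤ) := by exact_mod_cast hl
      refine K4 j i (((l:ℤ)+1)*e) (fun h1 => ?_) (fun h1 => ?_) ?_ (by omega) <;>
        [subst h1; subst h1; skip]
      · omega
      · omega
      · rcases he with rfl | rfl <;> omega
    -- (3,3)
    · exact hij (hK1 i j (by omega))

/-- The N×N cell with index pair (a, b), in a tiling of ℤ² by N×N cells. -/
def cell (N : ℕ) (a b : ℤ) : Set (ℤ × ℤ) :=
  {p | a * N ≤ p.1 ∧ p.1 < (a + 1) * N ∧ b * N ≤ p.2 ∧ p.2 < (b + 1) * N}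

theorem stmt_17 (N : ℕ) (hN : 0 < N) (a b a' b' : ℤ)
    (ha : 0 ≤ a) (ha9 : a < 9) (hb : 0 ≤ b) (hb9 : b < 9)
    (ha' : 0 ≤ a') (ha9' : a' < 9) (hb' : 9 ≤ b') (hb18' : b' < 18) :
    ∃ w : Fin N → (u : ℤ × ℤ) × (v : ℤ × ℤ) × gridGraph.Walk u v,
      (∀ i, (w i).2.2.IsPath) ∧
      (∀ i, (w i).1 ∈ cell N a b) ∧
      (∀ i, (w i).2.1 ∈ cell N a' b') ∧
      (∀ i, ∀ p ∈ (w i).2.2.support,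
        0 ≤ p.1 ∧ p.1 < 9 * N ∧ 0 ≤ p.2 ∧ p.2 < 18 * N) ∧
      (∀ i, (w i).2.2.length ≤ 36 * N) ∧
      (∀ i j, i ≠ j → ∀ p ∈ (w i).2.2.support, p ∉ (w j).2.2.support) := by
  have hNZ : (0:ℤ) < N := by exact_mod_cast hN
  have hmul : ∀ x y : ℤ, x ≤ y → x * N ≤ y * N := fun x y h =>
    mul_le_mul_of_nonneg_right h (le_of_lt hNZ)
  have hcell : ∀ (x y : ℤ) (p : ℤ × ℤ),
      (x * N ≤ p.1 ∧ p.1 < x * N + N ∧ y * N ≤ p.2 ∧ p.2 < y * N + N) → p ∈ cell N x y := by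
    intro x y p hp
    refine ⟨hp.1, ?_, hp.2.2.1, ?_⟩
    · rw [add_mul, one_mul]; exact hp.2.1
    · rw [add_mul, one_mul]; exact hp.2.2.2
  have hiN : ∀ i : Fin N, (i:ℤ) < N := fun i => by exact_mod_cast i.isLt
  rcases le_or_gt a a' with hle | hlt
  · have hAA' : a * (N:ℤ) ≤ a' * N := hmul _ _ hle
    have h9 : a * (N:ℤ) + N ≤ 9 * N := by
      have := hmul (a+1) 9 (by omega); rw [add_mul, one_mul] at this; linarith
    have h9' : a' * (N:ℤ) + N ≤ 9 * N := by
      have := hmul (a'+1) 9 (by omega); rw [add_mul, one_mul] at this; linarith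
    have h9b : b * (N:ℤ) + N ≤ 9 * N := by
      have := hmul (b+1) 9 (by omega); rw [add_mul, one_mul] at this; linarith
    have h9b' : 9 * (N:ℤ) ≤ b' * N := by have := hmul 9 b' hb'; linarith
    have h18b' : b' * (N:ℤ) + N ≤ 18 * N := by
      have := hmul (b'+1) 18 (by omega); rw [add_mul, one_mul] at this; linarith
    have hn2 : (((a' - a).toNat * N : ℕ) : ℤ) = a' * N - a * N := by
      push_cast [Int.toNat_of_nonneg (by omega : (0:ℤ) ≤ a' - a)]
      ring
    obtain ⟨w, h1, h2, h3, h4, h5, h6⟩ :=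
      master N hN (a*N) (b*N) (a'*N) (b'*N) 1 (Or.inl rfl)
        (fun i => (N:ℤ) - 1 - i) (fun i => by have := hiN i; omega)
        (fun i => by have := hiN i; omega)
        (mul_nonneg ha hNZ.le) h9 (mul_nonneg ha' hNZ.le) h9'
        (mul_nonneg hb hNZ.le) h9b h9b' h18b'
        ((a' - a).toNat * N) (by rw [mul_one]; omega)
        (by have := hmul (a'-a) 8 (by omega); rw [sub_mul] at this; omega)
        (fun i j h => Fin.ext (by have := hiN i; have := hiN j; omega))
        (fun i j hp1 hp2 hc => by have := hp1 rfl; omega)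
        (fun i j hx hc => by have := hiN i; have := hiN j; omega)
        (fun i j t hp1 hp2 hx hc => by
          have := hp1 rfl; have := hiN i; have := hiN j; omega)
    exact ⟨w, h1, fun i => hcell _ _ _ (h2 i), fun i => hcell _ _ _ (h3 i), h4, h5, h6⟩
  · have hAA' : a' * (N:ℤ) + N ≤ a * N := by
      have := hmul (a'+1) a (by omega); rw [add_mul, one_mul] at this; linarith
    have h9 : a * (N:ℤ) + N ≤ 9 * N := by
      have := hmul (a+1) 9 (by omega); rw [add_mul, one_mul] at this; linarith
    have h9' : a' * (N:ℤ) + N ≤ 9 * N := by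
      have := hmul (a'+1) 9 (by omega); rw [add_mul, one_mul] at this; linarith
    have h9b : b * (N:ℤ) + N ≤ 9 * N := by
      have := hmul (b+1) 9 (by omega); rw [add_mul, one_mul] at this; linarith
    have h9b' : 9 * (N:ℤ) ≤ b' * N := by have := hmul 9 b' hb'; linarith
    have h18b' : b' * (N:ℤ) + N ≤ 18 * N := by
      have := hmul (b'+1) 18 (by omega); rw [add_mul, one_mul] at this; linarith
    have hn2 : (((a - a').toNat * N : ℕ) : ℤ) = a * N - a' * N := by
      push_cast [Int.toNat_of_nonneg (by omega : (0:ℤ) ≤ a - a')]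
      ring
    obtain ⟨w, h1, h2, h3, h4, h5, h6⟩ :=
      master N hN (a*N) (b*N) (a'*N) (b'*N) (-1) (Or.inr rfl)
        (fun i => (i:ℤ)) (fun i => by have := hiN i; omega)
        (fun i => by have := hiN i; omega)
        (mul_nonneg ha hNZ.le) h9 (mul_nonneg ha' hNZ.le) h9'
        (mul_nonneg hb hNZ.le) h9b h9b' h18b'
        ((a - a').toNat * N) (by omega)
        (by have := hmul (a-a') 8 (by omega); rw [sub_mul] at this; omega)
        (fun i j h => Fin.ext (by have := hiN i; have := hiN j; omega))
        (fun i j hp1 hp2 hc => by have := hp2 rfl; omega)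
        (fun i j hx hc => by have := hiN i; have := hiN j; omega)
        (fun i j t hp1 hp2 hx hc => by
          have := hp2 rfl; have := hiN i; have := hiN j; omega)
    exact ⟨w, h1, fun i => hcell _ _ _ (h2 i), fun i => hcell _ _ _ (h3 i), h4, h5, h6⟩
end
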